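/- arXiv:1605.07877 — 3 statements merged into one kernel-verified Lean document; each statement's English description precedes it below -/
import Mathlib

section
/- Let U ⊆ ℝ be an open set, let a₀, a₁, a₂ : U → ℂ be differentiable functions, and let u, v : U → ℂ be three times differentiable functions each satisfying the second-order equation a₂·w'' + a₁·w' + a₀·w = 0 on U, where a₂ is nowhere vanishing. Then the product w = u·v satisfies the symmetric square equation a₂²·w''' + 3a₁a₂·w'' + (a₂·(4a₀ + a₁') + a₁·(2a₁ − a₂'))·w' + (2a₂·a₀' − 2a₀·a₂' + 4a₀a₁)·w = 0 on U. (In particular, the solution space of the third-order operator contains all products of pairs of solutions of the second-order operator, i.e., the symmetric square of its solution space.) -/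
/-- Symmetric square of a second-order linear ODE: if `u` and `v` each satisfy
`a₂w'' + a₁w' + a₀w = 0` on an open set `U` (with differentiable coefficients and
nowhere vanishing leading coefficient `a₂`), then the product `w = u·v` satisfies
`a₂²w''' + 3a₁a₂w'' + (a₂(4a₀+a₁') + a₁(2a₁−a₂'))w' + (2a₂a₀' − 2a₀a₂' + 4a₀a₁)w = 0`
on `U`. -/
theorem symmetric_square_ode (U : Set ℝ) (hUopen : IsOpen U)
    (a₀ a₁ a₂ : ℝ → ℂ)
    (ha₀ : ∀ z ∈ U, DifferentiableAt ℝ a₀ z)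
    (ha₁ : ∀ z ∈ U, DifferentiableAt ℝ a₁ z)
    (ha₂ : ∀ z ∈ U, DifferentiableAt ℝ a₂ z)
    (ha₂ne : ∀ z ∈ U, a₂ z ≠ 0)
    (u v : ℝ → ℂ)
    (hu1 : ∀ z ∈ U, DifferentiableAt ℝ u z)
    (hu2 : ∀ z ∈ U, DifferentiableAt ℝ (deriv u) z)
    (hu3 : ∀ z ∈ U, DifferentiableAt ℝ (deriv (deriv u)) z)
    (hv1 : ∀ z ∈ U, DifferentiableAt ℝ v z)
    (hv2 : ∀ z ∈ U, DifferentiableAt ℝ (deriv v) z)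
    (hv3 : ∀ z ∈ U, DifferentiableAt ℝ (deriv (deriv v)) z)
    (hueq : ∀ z ∈ U, a₂ z * deriv (deriv u) z + a₁ z * deriv u z + a₀ z * u z = 0)
    (hveq : ∀ z ∈ U, a₂ z * deriv (deriv v) z + a₁ z * deriv v z + a₀ z * v z = 0) :
    ∀ z ∈ U,
      (a₂ z) ^ 2 * deriv (deriv (deriv (fun x : ℝ => u x * v x))) z
        + 3 * a₁ z * a₂ z * deriv (deriv (fun x : ℝ => u x * v x)) z
        + (a₂ z * (4 * a₀ z + deriv a₁ z) + a₁ z * (2 * a₁ z - deriv a₂ z))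
            * deriv (fun x : ℝ => u x * v x) z
        + (2 * a₂ z * deriv a₀ z - 2 * a₀ z * deriv a₂ z + 4 * a₀ z * a₁ z)
            * (u z * v z) = 0 := by
  intro z hz
  have hmem : U ∈ nhds z := hUopen.mem_nhds hz
  -- first derivative of the product, on U
  have hd1 : ∀ x ∈ U, deriv (fun x : ℝ => u x * v x) x
      = deriv u x * v x + u x * deriv v x := by
    intro x hx
    exact deriv_mul (hu1 x hx) (hv1 x hx)
  have hd1' : deriv (fun x : ℝ => u x * v x)
      =ᶠ[nhds z] fun x => deriv u x * v x + u x * deriv v x :=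
    Filter.eventuallyEq_of_mem hmem hd1
  -- second derivative
  have hd2 : ∀ x ∈ U, deriv (fun x : ℝ => deriv u x * v x + u x * deriv v x) x
      = deriv (deriv u) x * v x + 2 * (deriv u x * deriv v x)
        + u x * deriv (deriv v) x := by
    intro x hx
    rw [deriv_fun_add ((hu2 x hx).fun_mul (hv1 x hx)) ((hu1 x hx).fun_mul (hv2 x hx)),
      deriv_fun_mul (hu2 x hx) (hv1 x hx), deriv_fun_mul (hu1 x hx) (hv2 x hx)]
    ring
  have hd2at : ∀ x ∈ U, deriv (deriv (fun x : ℝ => u x * v x)) x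
      = deriv (deriv u) x * v x + 2 * (deriv u x * deriv v x)
        + u x * deriv (deriv v) x := by
    intro x hx
    have hx' : deriv (fun x : ℝ => u x * v x)
        =ᶠ[nhds x] fun x => deriv u x * v x + u x * deriv v x :=
      Filter.eventuallyEq_of_mem (hUopen.mem_nhds hx) hd1
    rw [hx'.deriv_eq]
    exact hd2 x hx
  have hd2' : deriv (deriv (fun x : ℝ => u x * v x))
      =ᶠ[nhds z] fun x => deriv (deriv u) x * v x + 2 * (deriv u x * deriv v x)
        + u x * deriv (deriv v) x :=
    Filter.eventuallyEq_of_mem hmem hd2at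
  -- third derivative
  have hd3 : deriv (deriv (deriv (fun x : ℝ => u x * v x))) z
      = deriv (deriv (deriv u)) z * v z + 3 * (deriv (deriv u) z * deriv v z)
        + 3 * (deriv u z * deriv (deriv v) z) + u z * deriv (deriv (deriv v)) z := by
    rw [hd2'.deriv_eq]
    rw [deriv_fun_add (((hu3 z hz).fun_mul (hv1 z hz)).fun_add
        ((differentiableAt_const (2:ℂ)).fun_mul ((hu2 z hz).fun_mul (hv2 z hz))))
        ((hu1 z hz).fun_mul (hv3 z hz)),
      deriv_fun_add ((hu3 z hz).fun_mul (hv1 z hz))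
        ((differentiableAt_const (2:ℂ)).fun_mul ((hu2 z hz).fun_mul (hv2 z hz))),
      deriv_fun_mul (hu3 z hz) (hv1 z hz),
      deriv_const_mul 2 ((hu2 z hz).fun_mul (hv2 z hz)),
      deriv_fun_mul (hu2 z hz) (hv2 z hz),
      deriv_fun_mul (hu1 z hz) (hv3 z hz)]
    ring
  -- derivative of the ODE for u
  have hDu : deriv a₂ z * deriv (deriv u) z + a₂ z * deriv (deriv (deriv u)) z
      + deriv a₁ z * deriv u z + a₁ z * deriv (deriv u) z
      + deriv a₀ z * u z + a₀ z * deriv u z = 0 := by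
    have hF : (fun x => a₂ x * deriv (deriv u) x + a₁ x * deriv u x + a₀ x * u x)
        =ᶠ[nhds z] fun _ => (0 : ℂ) :=
      Filter.eventuallyEq_of_mem hmem hueq
    have h0 : deriv (fun x => a₂ x * deriv (deriv u) x + a₁ x * deriv u x + a₀ x * u x) z
        = 0 := by rw [hF.deriv_eq]; simp
    rw [deriv_fun_add (((ha₂ z hz).fun_mul (hu3 z hz)).fun_add ((ha₁ z hz).fun_mul (hu2 z hz)))
        ((ha₀ z hz).fun_mul (hu1 z hz)),
      deriv_fun_add ((ha₂ z hz).fun_mul (hu3 z hz)) ((ha₁ z hz).fun_mul (hu2 z hz)),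
      deriv_fun_mul (ha₂ z hz) (hu3 z hz), deriv_fun_mul (ha₁ z hz) (hu2 z hz),
      deriv_fun_mul (ha₀ z hz) (hu1 z hz)] at h0
    linear_combination h0
  have hDv : deriv a₂ z * deriv (deriv v) z + a₂ z * deriv (deriv (deriv v)) z
      + deriv a₁ z * deriv v z + a₁ z * deriv (deriv v) z
      + deriv a₀ z * v z + a₀ z * deriv v z = 0 := by
    have hF : (fun x => a₂ x * deriv (deriv v) x + a₁ x * deriv v x + a₀ x * v x)
        =ᶠ[nhds z] fun _ => (0 : ℂ) :=
      Filter.eventuallyEq_of_mem hmem hveq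
    have h0 : deriv (fun x => a₂ x * deriv (deriv v) x + a₁ x * deriv v x + a₀ x * v x) z
        = 0 := by rw [hF.deriv_eq]; simp
    rw [deriv_fun_add (((ha₂ z hz).fun_mul (hv3 z hz)).fun_add ((ha₁ z hz).fun_mul (hv2 z hz)))
        ((ha₀ z hz).fun_mul (hv1 z hz)),
      deriv_fun_add ((ha₂ z hz).fun_mul (hv3 z hz)) ((ha₁ z hz).fun_mul (hv2 z hz)),
      deriv_fun_mul (ha₂ z hz) (hv3 z hz), deriv_fun_mul (ha₁ z hz) (hv2 z hz),
      deriv_fun_mul (ha₀ z hz) (hv1 z hz)] at h0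
    linear_combination h0
  rw [hd1 z hz, hd2at z hz, hd3]
  linear_combination (a₂ z * v z) * hDu + (a₂ z * u z) * hDv
    + (3 * a₂ z * deriv v z + (2 * a₁ z - deriv a₂ z) * v z) * (hueq z hz)
    + (3 * a₂ z * deriv u z + (2 * a₁ z - deriv a₂ z) * u z) * (hveq z hz)
end

section
/- Let U be an open subset of the real interval (0,1) and let u : U → ℂ be a three times differentiable function satisfying the second-order equation z(1−z)·u''(z) + (1 − (3/2)z)·u'(z) − (3/64)·u(z) = 0 on U (the hypergeometric equation with a = 1/8, b = 3/8, c = 1, i.e., the operator L_triangular = θ² − z(θ+1/8)(θ+3/8)). Then w = u² satisfies the third-order Picard–Fuchs equation of the Dwork pencil of quartic K3 surfaces, z²(1−z)·w'''(z) + z(3 − (9/2)z)·w''(z) + (1 − (51/16)z)·w'(z) − (3/32)·w(z) = 0 on U (the operator L_K3 = θ³ − z(θ+1/4)(θ+1/2)(θ+3/4)). -/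
/-- If `u` satisfies the hypergeometric equation
`z(1−z)u'' + (1−(3/2)z)u' − (3/64)u = 0` (the operator `θ² − z(θ+1/8)(θ+3/8)`)
on an open set `U ⊆ (0,1)`, then `w = u²` satisfies the third-order Picard–Fuchs
equation of the Dwork pencil of quartic K3 surfaces,
`z²(1−z)w''' + z(3−(9/2)z)w'' + (1−(51/16)z)w' − (3/32)w = 0`
(the operator `θ³ − z(θ+1/4)(θ+1/2)(θ+3/4)`). -/
theorem K3_picard_fuchs_symmetric_square (U : Set ℝ) (hUopen : IsOpen U)
    (hU : U ⊆ Set.Ioo (0 : ℝ) 1)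
    (u : ℝ → ℂ)
    (hu1 : ∀ z ∈ U, DifferentiableAt ℝ u z)
    (hu2 : ∀ z ∈ U, DifferentiableAt ℝ (deriv u) z)
    (hu3 : ∀ z ∈ U, DifferentiableAt ℝ (deriv (deriv u)) z)
    (hueq : ∀ z ∈ U,
      (z : ℂ) * (1 - (z : ℂ)) * deriv (deriv u) z
        + (1 - (3/2 : ℂ) * (z : ℂ)) * deriv u z - (3/64 : ℂ) * u z = 0) :
    ∀ z ∈ U,
      (z : ℂ) ^ 2 * (1 - (z : ℂ)) * deriv (deriv (deriv (fun x : ℝ => (u x) ^ 2))) z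
        + (z : ℂ) * (3 - (9/2 : ℂ) * (z : ℂ)) * deriv (deriv (fun x : ℝ => (u x) ^ 2)) z
        + (1 - (51/16 : ℂ) * (z : ℂ)) * deriv (fun x : ℝ => (u x) ^ 2) z
        - (3/32 : ℂ) * (u z) ^ 2 = 0 := by
  intro z hz
  have hid : ∀ x : ℝ, HasDerivAt (fun t : ℝ => (t : ℂ)) 1 x := fun x => by
    exact Complex.ofRealCLM.hasDerivAt (x := x)
  -- first derivative of w on U
  have hw1 : ∀ x ∈ U, deriv (fun t : ℝ => (u t) ^ 2) x = 2 * u x * deriv u x := by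
    intro x hx
    have h : HasDerivAt (fun t : ℝ => (u t) ^ 2) (2 * u x * deriv u x) x := by
      have h0 := (hu1 x hx).hasDerivAt.mul (hu1 x hx).hasDerivAt
      have : deriv u x * u x + u x * deriv u x = 2 * u x * deriv u x := by ring
      rw [this] at h0
      have h1 : HasDerivAt (fun t : ℝ => u t * u t) (2 * u x * deriv u x) x := h0
      simpa [sq] using h1
    exact h.deriv
  -- second derivative of w on U
  have hw2 : ∀ x ∈ U, deriv (deriv (fun t : ℝ => (u t) ^ 2)) x
      = 2 * (deriv u x * deriv u x + u x * deriv (deriv u) x) := by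
    intro x hx
    have hev : deriv (fun t : ℝ => (u t) ^ 2) =ᶠ[nhds x] fun t => 2 * u t * deriv u t :=
      Filter.eventuallyEq_of_mem (hUopen.mem_nhds hx) hw1
    rw [hev.deriv_eq]
    have h : HasDerivAt (fun t => 2 * u t * deriv u t)
        (2 * (deriv u x * deriv u x + u x * deriv (deriv u) x)) x := by
      have h0 := ((hu1 x hx).hasDerivAt.mul (hu2 x hx).hasDerivAt).const_mul (2 : ℂ)
      simpa [mul_assoc] using h0
    exact h.deriv
  -- third derivative of w at z
  have hw3 : deriv (deriv (deriv (fun t : ℝ => (u t) ^ 2))) z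
      = 2 * (deriv (deriv u) z * deriv u z + deriv u z * deriv (deriv u) z
          + (deriv u z * deriv (deriv u) z + u z * deriv (deriv (deriv u)) z)) := by
    have hev : deriv (deriv (fun t : ℝ => (u t) ^ 2))
        =ᶠ[nhds z] fun t => 2 * (deriv u t * deriv u t + u t * deriv (deriv u) t) :=
      Filter.eventuallyEq_of_mem (hUopen.mem_nhds hz) hw2
    rw [hev.deriv_eq]
    have h : HasDerivAt (fun t => 2 * (deriv u t * deriv u t + u t * deriv (deriv u) t))
        (2 * (deriv (deriv u) z * deriv u z + deriv u z * deriv (deriv u) z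
          + (deriv u z * deriv (deriv u) z + u z * deriv (deriv (deriv u)) z))) z := by
      have h1 := (hu2 z hz).hasDerivAt.mul (hu2 z hz).hasDerivAt
      have h2 := (hu1 z hz).hasDerivAt.mul (hu3 z hz).hasDerivAt
      exact (h1.add h2).const_mul (2 : ℂ)
    exact h.deriv
  -- differentiate the hypergeometric equation
  have hevF : (fun t : ℝ => (t : ℂ) * (1 - (t : ℂ)) * deriv (deriv u) t
      + (1 - (3/2 : ℂ) * (t : ℂ)) * deriv u t - (3/64 : ℂ) * u t)
      =ᶠ[nhds z] (fun _ => (0 : ℂ)) :=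
    Filter.eventuallyEq_of_mem (hUopen.mem_nhds hz) (fun x hx => hueq x hx)
  have hD : (1 - 2 * (z : ℂ)) * deriv (deriv u) z
      + (z : ℂ) * (1 - (z : ℂ)) * deriv (deriv (deriv u)) z
      + ((-(3/2 : ℂ)) * deriv u z + (1 - (3/2 : ℂ) * (z : ℂ)) * deriv (deriv u) z)
      - (3/64 : ℂ) * deriv u z = 0 := by
    have hc : HasDerivAt (fun t : ℝ => (t : ℂ) * (1 - (t : ℂ))) (1 - 2 * (z : ℂ)) z := by
      have h0 : HasDerivAt (fun t : ℝ => (t : ℂ) * (1 - (t : ℂ))) _ z := (hid z).mul ((hasDerivAt_const z (1 : ℂ)).sub (hid z))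
      convert h0 using 1; simp; ring
    have hc2 : HasDerivAt (fun t : ℝ => (1 : ℂ) - (3/2 : ℂ) * (t : ℂ)) (-(3/2 : ℂ)) z := by
      have h0 : HasDerivAt (fun t : ℝ => (1 : ℂ) - (3/2 : ℂ) * (t : ℂ)) _ z := (hasDerivAt_const z (1 : ℂ)).sub ((hid z).const_mul (3/2 : ℂ))
      convert h0 using 1; ring
    have h : HasDerivAt (fun t : ℝ => (t : ℂ) * (1 - (t : ℂ)) * deriv (deriv u) t
        + (1 - (3/2 : ℂ) * (t : ℂ)) * deriv u t - (3/64 : ℂ) * u t)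
        ((1 - 2 * (z : ℂ)) * deriv (deriv u) z
          + (z : ℂ) * (1 - (z : ℂ)) * deriv (deriv (deriv u)) z
          + ((-(3/2 : ℂ)) * deriv u z + (1 - (3/2 : ℂ) * (z : ℂ)) * deriv (deriv u) z)
          - (3/64 : ℂ) * deriv u z) z :=
      ((hc.mul (hu3 z hz).hasDerivAt).add (hc2.mul (hu2 z hz).hasDerivAt)).sub
        ((hu1 z hz).hasDerivAt.const_mul (3/64 : ℂ))
    have hd := h.deriv
    rw [hevF.deriv_eq] at hd
    simpa using hd.symm
  rw [hw3, hw2 z hz, hw1 z hz]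
  linear_combination (6 * (z : ℂ) * deriv u z + 2 * u z) * hueq z hz
    + 2 * (z : ℂ) * u z * hD
end

section
/- Let U ⊆ (0,1) be an open interval and let u₀, u₁ : U → ℂ be twice differentiable solutions of z(1−z)·u'' + (1 − (3/2)z)·u' − (3/64)·u = 0 on U. Define the three periods π₀ = u₀², π₁ = u₀u₁, π₂ = u₁² (solutions of the K3 Picard–Fuchs equation). Then the function z ↦ (π₀(z)·π₂''(z) + π₂(z)·π₀''(z) − 2π₁(z)·π₁''(z)) · z²(1−z) is constant on U; that is, the Yukawa-type bilinear combination π₀π₂'' + π₂π₀'' − 2π₁π₁'' equals a constant multiple of 1/(z²(1−z)), recovering the K3 Yukawa coupling C_zz = 1/(z²(1−z)) up to normalization. -/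
/-- If `u₀, u₁` solve `z(1−z)u'' + (1−(3/2)z)u' − (3/64)u = 0` on an open interval
`U ⊆ (0,1)`, and `π₀ = u₀²`, `π₁ = u₀u₁`, `π₂ = u₁²` are the corresponding solutions
of the K3 Picard–Fuchs equation, then `(π₀π₂'' + π₂π₀'' − 2π₁π₁'')·z²(1−z)` is
constant on `U`; i.e. `π₀π₂'' + π₂π₀'' − 2π₁π₁''` is a constant multiple of
`1/(z²(1−z))`, recovering the K3 Yukawa coupling `C_zz = 1/(z²(1−z))`. -/
theorem K3_yukawa_bilinear_constant (c d : ℝ)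
    (hU : Set.Ioo c d ⊆ Set.Ioo (0 : ℝ) 1)
    (u₀ u₁ : ℝ → ℂ)
    (hu₀1 : ∀ z ∈ Set.Ioo c d, DifferentiableAt ℝ u₀ z)
    (hu₀2 : ∀ z ∈ Set.Ioo c d, DifferentiableAt ℝ (deriv u₀) z)
    (hu₁1 : ∀ z ∈ Set.Ioo c d, DifferentiableAt ℝ u₁ z)
    (hu₁2 : ∀ z ∈ Set.Ioo c d, DifferentiableAt ℝ (deriv u₁) z)
    (hode₀ : ∀ z ∈ Set.Ioo c d,
      (z : ℂ) * (1 - (z : ℂ)) * deriv (deriv u₀) z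
        + (1 - (3/2 : ℂ) * (z : ℂ)) * deriv u₀ z - (3/64 : ℂ) * u₀ z = 0)
    (hode₁ : ∀ z ∈ Set.Ioo c d,
      (z : ℂ) * (1 - (z : ℂ)) * deriv (deriv u₁) z
        + (1 - (3/2 : ℂ) * (z : ℂ)) * deriv u₁ z - (3/64 : ℂ) * u₁ z = 0) :
    ∃ C : ℂ, ∀ z ∈ Set.Ioo c d,
      ((fun x : ℝ => (u₀ x) ^ 2) z * deriv (deriv (fun x : ℝ => (u₁ x) ^ 2)) z
        + (fun x : ℝ => (u₁ x) ^ 2) z * deriv (deriv (fun x : ℝ => (u₀ x) ^ 2)) z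
        - 2 * (fun x : ℝ => u₀ x * u₁ x) z
            * deriv (deriv (fun x : ℝ => u₀ x * u₁ x)) z)
        * ((z : ℂ) ^ 2 * (1 - (z : ℂ))) = C := by
  classical
  set S : Set ℝ := Set.Ioo c d with hS
  have hSopen : IsOpen S := isOpen_Ioo
  -- the Wronskian and the candidate constant function
  set W : ℝ → ℂ := fun z => u₀ z * deriv u₁ z - u₁ z * deriv u₀ z with hW
  set G : ℝ → ℂ := fun z => 2 * (W z) ^ 2 * ((z : ℂ) ^ 2 * (1 - (z : ℂ))) with hG
  -- G has derivative 0 on S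
  have hGderiv : ∀ z ∈ S, HasDerivAt G 0 z := by
    intro z hz
    have hz01 := hU hz
    have hz0 : (z : ℂ) ≠ 0 := by
      exact_mod_cast ne_of_gt hz01.1
    have hz1 : (1 : ℂ) - (z : ℂ) ≠ 0 := by
      have : (z : ℝ) ≠ 1 := ne_of_lt hz01.2
      simp [sub_eq_zero]
      exact fun h => this (by exact_mod_cast h.symm)
    have hid : HasDerivAt (fun x : ℝ => (x : ℂ)) 1 z := by
      simpa using (hasDerivAt_id' z).ofReal_comp
    have hpoly : HasDerivAt (fun x : ℝ => (x : ℂ) ^ 2 * (1 - (x : ℂ)))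
        (2 * (z : ℂ) * (1 - (z : ℂ)) + (z : ℂ) ^ 2 * (-1)) z := by
      have h1 : HasDerivAt (fun x : ℝ => (x : ℂ) ^ 2) (2 * (z : ℂ)) z := by
        have := hid.fun_mul hid
        rw [show (fun x : ℝ => (x : ℂ) ^ 2) = fun x : ℝ => (x : ℂ) * (x : ℂ) by
          funext x; ring]
        exact this.congr_deriv (by ring)
      have h2 : HasDerivAt (fun x : ℝ => (1 : ℂ) - (x : ℂ)) (-1) z := by
        simpa using (hasDerivAt_const z (1 : ℂ)).fun_sub hid
      simpa using h1.fun_mul h2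
    have hWd : HasDerivAt W
        (u₀ z * deriv (deriv u₁) z - u₁ z * deriv (deriv u₀) z) z := by
      have h1 := (hu₀1 z hz).hasDerivAt.fun_mul (hu₁2 z hz).hasDerivAt
      have h2 := (hu₁1 z hz).hasDerivAt.fun_mul (hu₀2 z hz).hasDerivAt
      have := h1.fun_sub h2
      exact this.congr_deriv (by ring)
    have hGd : HasDerivAt G
        (2 * (2 * W z * (u₀ z * deriv (deriv u₁) z - u₁ z * deriv (deriv u₀) z))
            * ((z : ℂ) ^ 2 * (1 - (z : ℂ)))
          + 2 * (W z) ^ 2 * (2 * (z : ℂ) * (1 - (z : ℂ)) + (z : ℂ) ^ 2 * (-1))) z := by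
      have hW2 : HasDerivAt (fun x => 2 * (W x) ^ 2)
          (2 * (2 * W z * (u₀ z * deriv (deriv u₁) z - u₁ z * deriv (deriv u₀) z))) z := by
        have := (hWd.fun_mul hWd).const_mul (2 : ℂ)
        rw [show (fun x => 2 * (W x) ^ 2) = fun x => 2 * (W x * W x) by
          funext x; ring]
        exact this.congr_deriv (by ring)
      simpa using hW2.fun_mul hpoly
    have e₀ : (z : ℂ) * (1 - (z : ℂ)) * deriv (deriv u₀) z
        = (3/64 : ℂ) * u₀ z - (1 - (3/2 : ℂ) * (z : ℂ)) * deriv u₀ z := by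
      linear_combination hode₀ z hz
    have e₁ : (z : ℂ) * (1 - (z : ℂ)) * deriv (deriv u₁) z
        = (3/64 : ℂ) * u₁ z - (1 - (3/2 : ℂ) * (z : ℂ)) * deriv u₁ z := by
      linear_combination hode₁ z hz
    have hzero : (2 * (2 * W z * (u₀ z * deriv (deriv u₁) z - u₁ z * deriv (deriv u₀) z))
            * ((z : ℂ) ^ 2 * (1 - (z : ℂ)))
          + 2 * (W z) ^ 2 * (2 * (z : ℂ) * (1 - (z : ℂ)) + (z : ℂ) ^ 2 * (-1))) = 0 := by
      simp only [hW]
      linear_combination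
        (4 * (u₀ z * deriv u₁ z - u₁ z * deriv u₀ z) * (z : ℂ) * u₀ z) * e₁
        - (4 * (u₀ z * deriv u₁ z - u₁ z * deriv u₀ z) * (z : ℂ) * u₁ z) * e₀
    rw [hzero] at hGd
    exact hGd
  -- G is constant on S
  rcases Set.eq_empty_or_nonempty S with hemp | ⟨z₀, hz₀⟩
  · exact ⟨0, fun z hz => absurd hz (by rw [hemp]; exact not_false)⟩
  refine ⟨G z₀, fun z hz => ?_⟩
  -- first: the expression equals G z
  have key : ∀ y ∈ S,
      ((fun x : ℝ => (u₀ x) ^ 2) y * deriv (deriv (fun x : ℝ => (u₁ x) ^ 2)) y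
        + (fun x : ℝ => (u₁ x) ^ 2) y * deriv (deriv (fun x : ℝ => (u₀ x) ^ 2)) y
        - 2 * (fun x : ℝ => u₀ x * u₁ x) y
            * deriv (deriv (fun x : ℝ => u₀ x * u₁ x)) y)
        * ((y : ℂ) ^ 2 * (1 - (y : ℂ))) = G y := by
    intro y hy
    have hmem : S ∈ nhds y := hSopen.mem_nhds hy
    -- first derivatives, as eventual equalities
    have hd₀ : deriv (fun x : ℝ => (u₀ x) ^ 2) =ᶠ[nhds y]
        fun x => 2 * u₀ x * deriv u₀ x := by
      have hfun : (fun x : ℝ => (u₀ x) ^ 2) = fun x => u₀ x * u₀ x := by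
        funext x; ring
      filter_upwards [hmem] with x hx
      rw [hfun, ((hu₀1 x hx).hasDerivAt.fun_mul (hu₀1 x hx).hasDerivAt).deriv]
      ring
    have hd₁ : deriv (fun x : ℝ => (u₁ x) ^ 2) =ᶠ[nhds y]
        fun x => 2 * u₁ x * deriv u₁ x := by
      have hfun : (fun x : ℝ => (u₁ x) ^ 2) = fun x => u₁ x * u₁ x := by
        funext x; ring
      filter_upwards [hmem] with x hx
      rw [hfun, ((hu₁1 x hx).hasDerivAt.fun_mul (hu₁1 x hx).hasDerivAt).deriv]
      ring
    have hd₂ : deriv (fun x : ℝ => u₀ x * u₁ x) =ᶠ[nhds y]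
        fun x => deriv u₀ x * u₁ x + u₀ x * deriv u₁ x := by
      filter_upwards [hmem] with x hx
      exact ((hu₀1 x hx).hasDerivAt.mul (hu₁1 x hx).hasDerivAt).deriv
    -- second derivatives
    have hdd₀ : deriv (deriv (fun x : ℝ => (u₀ x) ^ 2)) y
        = 2 * (deriv u₀ y) ^ 2 + 2 * u₀ y * deriv (deriv u₀) y := by
      rw [hd₀.deriv_eq]
      have h := (((hu₀1 y hy).hasDerivAt.fun_mul (hu₀2 y hy).hasDerivAt).const_mul (2 : ℂ)).deriv
      rw [show (fun x => 2 * u₀ x * deriv u₀ x) = fun x => 2 * (u₀ x * deriv u₀ x) by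
        funext x; ring]
      rw [h]; ring
    have hdd₁ : deriv (deriv (fun x : ℝ => (u₁ x) ^ 2)) y
        = 2 * (deriv u₁ y) ^ 2 + 2 * u₁ y * deriv (deriv u₁) y := by
      rw [hd₁.deriv_eq]
      have h := (((hu₁1 y hy).hasDerivAt.fun_mul (hu₁2 y hy).hasDerivAt).const_mul (2 : ℂ)).deriv
      rw [show (fun x => 2 * u₁ x * deriv u₁ x) = fun x => 2 * (u₁ x * deriv u₁ x) by
        funext x; ring]
      rw [h]; ring
    have hdd₂ : deriv (deriv (fun x : ℝ => u₀ x * u₁ x)) y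
        = deriv (deriv u₀) y * u₁ y + 2 * deriv u₀ y * deriv u₁ y
          + u₀ y * deriv (deriv u₁) y := by
      rw [hd₂.deriv_eq]
      have h1 := (hu₀2 y hy).hasDerivAt.fun_mul (hu₁1 y hy).hasDerivAt
      have h2 := (hu₀1 y hy).hasDerivAt.fun_mul (hu₁2 y hy).hasDerivAt
      rw [(h1.fun_add h2).deriv]; ring
    simp only [hdd₀, hdd₁, hdd₂, hG, hW]
    ring
  rw [key z hz]
  -- constancy via the mean value theorem on the convex set S
  have hdiff : DifferentiableOn ℝ G S := fun y hy =>
    ((hGderiv y hy).differentiableAt).differentiableWithinAt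
  have hfd : ∀ y ∈ S, fderivWithin ℝ G S y = 0 := by
    intro y hy
    have : fderivWithin ℝ G S y = fderiv ℝ G y :=
      fderivWithin_of_isOpen hSopen hy
    rw [this, ((hGderiv y hy).hasFDerivAt).fderiv]
    ext
    simp
  exact (convex_Ioo c d).is_const_of_fderivWithin_eq_zero hdiff hfd hz hz₀
end
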